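/- Concatenating two big-walks yields a big-walk; consequently the counting sequence satisfies the supermultiplicative inequality b_{m+n} ≥ b_m * b_n for all m, n ≥ 0. -/

import Mathlib

open Filter

/-- A step of a lattice walk: North, East, South or West. -/
inductive Step : Type
  | N | E | S | W
  deriving DecidableEq

/-- The vector of a step. -/
def Step.vec : Step → ℤ × ℤ
  | .N => (0, 1)
  | .E => (1, 0)
  | .S => (0, -1)
  | .W => (-1, 0)

/-- The endpoint of a walk starting at the origin. -/
def endpt (w : List Step) : ℤ × ℤ := (w.map Step.vec).sum

/-- All points visited by a walk starting at the origin (including start and end). -/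
def positions (w : List Step) : List (ℤ × ℤ) :=
  w.scanl (fun p s => p + s.vec) ((0, 0) : ℤ × ℤ)

/-- A walk is eager if it contains no ES and no NW corner. -/
def Eager (w : List Step) : Prop :=
  ¬ [Step.E, Step.S] <:+: w ∧ ¬ [Step.N, Step.W] <:+: w

/-- A quarter-plane loop: a nonempty walk returning to its starting point and
staying (weakly) north-east of it. -/
def IsQPLoop (l : List Step) : Prop :=
  l ≠ [] ∧ endpt l = (0, 0) ∧ ∀ p ∈ positions l, 0 ≤ p.1 ∧ 0 ≤ p.2

/-- A walk is standard if every QP-subloop begins with an N step. -/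
def Standard (w : List Step) : Prop :=
  ∀ a l b : List Step, w = a ++ l ++ b → IsQPLoop l → l.head? = some Step.N

/-- The walk stays in the half-plane x + y ≥ 0. -/
def InHalfPlane (w : List Step) : Prop :=
  ∀ p ∈ positions w, 0 ≤ p.1 + p.2

/-- A big-walk: confined to the half-plane x+y ≥ 0, from (0,0) to the line x+y=0,
standard and eager. -/
def IsBigWalk (w : List Step) : Prop :=
  InHalfPlane w ∧ (endpt w).1 + (endpt w).2 = 0 ∧ Standard w ∧ Eager w

/-- A left-walk: a big-walk ending at (x,-x) with x ≤ 0. -/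
def IsLeftWalk (w : List Step) : Prop := IsBigWalk w ∧ (endpt w).1 ≤ 0

/-- A right-walk: a big-walk ending at (x,-x) with x ≥ 0. -/
def IsRightWalk (w : List Step) : Prop := IsBigWalk w ∧ 0 ≤ (endpt w).1

/-- Vertical-happy: every step taken from a point of the lines x+y=0 or x+y=1
is N or S. -/
def VerticalHappy (w : List Step) : Prop :=
  ∀ a s b, w = a ++ s :: b →
    ((endpt a).1 + (endpt a).2 = 0 ∨ (endpt a).1 + (endpt a).2 = 1) →
    s = Step.N ∨ s = Step.S

/-- A deque-walk: a vertical-happy big-walk. -/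
def IsDequeWalk (w : List Step) : Prop := IsBigWalk w ∧ VerticalHappy w

/-- The walk stays in the quarter plane x, y ≥ 0. -/
def InQuarterPlane (w : List Step) : Prop :=
  ∀ p ∈ positions w, 0 ≤ p.1 ∧ 0 ≤ p.2

/-- A 2sip-walk: a quarter-plane walk from (0,0) to (0,0), standard and eager. -/
def Is2sipWalk (w : List Step) : Prop :=
  InQuarterPlane w ∧ endpt w = (0, 0) ∧ Standard w ∧ Eager w

/-- `bCount n` = number of big-walks of length 2n. -/
noncomputable def bCount (n : ℕ) : ℕ :=
  Nat.card {w : List Step // w.length = 2 * n ∧ IsBigWalk w}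

/-- `blCount n` = number of left-walks of length 2n. -/
noncomputable def blCount (n : ℕ) : ℕ :=
  Nat.card {w : List Step // w.length = 2 * n ∧ IsLeftWalk w}

/-- `brCount n` = number of right-walks of length 2n. -/
noncomputable def brCount (n : ℕ) : ℕ :=
  Nat.card {w : List Step // w.length = 2 * n ∧ IsRightWalk w}

/-- `dCount n` = number of deque-walks of length 2n. -/
noncomputable def dCount (n : ℕ) : ℕ :=
  Nat.card {w : List Step // w.length = 2 * n ∧ IsDequeWalk w}

/-- `pCount n` = number of 2sip-walks of length 2n. -/
noncomputable def pCount (n : ℕ) : ℕ :=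
  Nat.card {w : List Step // w.length = 2 * n ∧ Is2sipWalk w}

/-- Concatenating two big-walks yields a big-walk; consequently
b_{m+n} ≥ b_m * b_n. -/

/- ### Auxiliary lemmas -/

def posFrom (c : ℤ × ℤ) (w : List Step) : List (ℤ × ℤ) :=
  w.scanl (fun p s => p + s.vec) c

lemma positions_eq_posFrom (w : List Step) : positions w = posFrom 0 w := rfl

lemma posFrom_nil (c : ℤ × ℤ) : posFrom c [] = [c] := rfl

lemma posFrom_cons (c : ℤ × ℤ) (s : Step) (w : List Step) :
    posFrom c (s :: w) = c :: posFrom (c + s.vec) w := by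
  simp only [posFrom, List.scanl_cons]

lemma endpt_nil : endpt [] = 0 := rfl

lemma endpt_cons (s : Step) (w : List Step) : endpt (s :: w) = s.vec + endpt w := by
  simp [endpt]

lemma endpt_append (u v : List Step) : endpt (u ++ v) = endpt u + endpt v := by
  simp [endpt]

lemma self_mem_posFrom (c : ℤ × ℤ) (w : List Step) : c ∈ posFrom c w := by
  cases w <;> simp [posFrom_nil, posFrom_cons]

lemma endpt_mem_posFrom (c : ℤ × ℤ) (w : List Step) : c + endpt w ∈ posFrom c w := by
  induction w generalizing c with
  | nil => simp [posFrom_nil, endpt_nil]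
  | cons s w ih =>
    rw [posFrom_cons, endpt_cons, ← add_assoc]
    exact List.mem_cons_of_mem _ (ih _)

lemma mem_posFrom_append (p c : ℤ × ℤ) (u v : List Step) :
    p ∈ posFrom c (u ++ v) ↔ p ∈ posFrom c u ∨ p ∈ posFrom (c + endpt u) v := by
  induction u generalizing c with
  | nil =>
    rw [List.nil_append, endpt_nil, add_zero, posFrom_nil]
    simp only [List.mem_singleton]
    exact ⟨fun h => Or.inr h, fun h => h.elim (fun h => h ▸ self_mem_posFrom c v) id⟩
  | cons s u ih =>
    rw [List.cons_append, posFrom_cons, posFrom_cons, endpt_cons, ← add_assoc]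
    simp only [List.mem_cons, ih]
    tauto

lemma posFrom_shift (c : ℤ × ℤ) (w : List Step) :
    posFrom c w = (positions w).map (fun q => c + q) := by
  rw [positions_eq_posFrom]
  induction w generalizing c with
  | nil => simp [posFrom_nil]
  | cons s w ih =>
    rw [posFrom_cons, posFrom_cons, List.map_cons, add_zero, zero_add]
    congr 1
    rw [ih (c + s.vec), ih s.vec, List.map_map]
    congr 1
    funext q
    simp [add_assoc]

lemma mem_positions_append (p : ℤ × ℤ) (u v : List Step) :
    p ∈ positions (u ++ v) ↔ p ∈ positions u ∨ ∃ q ∈ positions v, p = endpt u + q := by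
  rw [positions_eq_posFrom, mem_posFrom_append, ← positions_eq_posFrom, zero_add,
    posFrom_shift]
  simp only [List.mem_map]
  constructor
  · rintro (h | ⟨q, hq, rfl⟩)
    · exact Or.inl h
    · exact Or.inr ⟨q, hq, rfl⟩
  · rintro (h | ⟨q, hq, rfl⟩)
    · exact Or.inl h
    · exact Or.inr ⟨q, hq, rfl⟩

lemma endpt_mem_positions (w : List Step) : endpt w ∈ positions w := by
  rw [positions_eq_posFrom]
  simpa using endpt_mem_posFrom 0 w

lemma mem_positions_of_prefix {p : ℤ × ℤ} (u v : List Step) (h : p ∈ positions u) :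
    p ∈ positions (u ++ v) :=
  (mem_positions_append p u v).2 (Or.inl h)

lemma last_step (w a : List Step) (s : Step) (hw : IsBigWalk w) (h : w = a ++ [s]) :
    s = Step.S ∨ s = Step.W := by
  have hp : endpt a ∈ positions w := h ▸ mem_positions_of_prefix a [s] (endpt_mem_positions a)
  have h1 : 0 ≤ (endpt a).1 + (endpt a).2 := hw.1 _ hp
  have h2 : (endpt w).1 + (endpt w).2 = 0 := hw.2.1
  rw [h, endpt_append] at h2
  cases s
  · exfalso
    have hv : endpt [Step.N] = ((0 : ℤ), (1 : ℤ)) := by simp [endpt, Step.vec]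
    rw [hv] at h2
    simp only [Prod.fst_add, Prod.snd_add] at h2
    omega
  · exfalso
    have hv : endpt [Step.E] = ((1 : ℤ), (0 : ℤ)) := by simp [endpt, Step.vec]
    rw [hv] at h2
    simp only [Prod.fst_add, Prod.snd_add] at h2
    omega
  · exact Or.inl rfl
  · exact Or.inr rfl

lemma split_append (w₁ w₂ a l b : List Step) (h : w₁ ++ w₂ = a ++ l ++ b) :
    (∃ c, w₁ = a ++ l ++ c) ∨ (∃ c, w₂ = c ++ l ++ b) ∨
    (∃ l₁ l₂, l = l₁ ++ l₂ ∧ l₁ ≠ [] ∧ l₂ ≠ [] ∧ w₁ = a ++ l₁ ∧ w₂ = l₂ ++ b) := by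
  rw [List.append_assoc] at h
  rcases List.append_eq_append_iff.1 h with ⟨a', _, hw⟩ | ⟨c', hw1, hlb⟩
  · exact Or.inr (Or.inl ⟨a', by rw [hw, List.append_assoc]⟩)
  · rcases List.append_eq_append_iff.1 hlb with ⟨x, hc', hb⟩ | ⟨x, hl, hw2⟩
    · exact Or.inl ⟨x, by rw [hw1, hc', List.append_assoc]⟩
    · rcases eq_or_ne c' [] with rfl | hc'
      · refine Or.inr (Or.inl ⟨[], ?_⟩)
        simp only [List.nil_append] at hl
        rw [hw2, hl]
        simp
      · rcases eq_or_ne x [] with rfl | hx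
        · refine Or.inl ⟨[], ?_⟩
          simp only [List.append_nil] at hl
          rw [hw1, hl]
          simp
        · exact Or.inr (Or.inr ⟨c', x, hl, hc', hx, hw1, hw2⟩)

lemma pair_split {x y : Step} {l₁ l₂ : List Step} (h : [x, y] = l₁ ++ l₂)
    (h1 : l₁ ≠ []) (h2 : l₂ ≠ []) : l₁ = [x] ∧ l₂ = [y] := by
  cases l₁ with
  | nil => exact absurd rfl h1
  | cons a t =>
    simp only [List.cons_append, List.cons.injEq] at h
    obtain ⟨rfl, h⟩ := h
    cases t with
    | nil => exact ⟨rfl, by simpa using h.symm⟩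
    | cons b t' =>
      exfalso
      simp only [List.cons_append, List.cons.injEq] at h
      obtain ⟨rfl, h⟩ := h
      rcases List.append_eq_nil_iff.1 h.symm with ⟨_, rfl⟩
      exact h2 rfl

lemma eager_append (w₁ w₂ : List Step) (h1 : IsBigWalk w₁) (h2 : IsBigWalk w₂) :
    Eager (w₁ ++ w₂) := by
  constructor
  · rintro ⟨s, t, hst⟩
    rcases split_append w₁ w₂ s [Step.E, Step.S] t hst.symm with
      ⟨c, hc⟩ | ⟨c, hc⟩ | ⟨l₁, l₂, hl, hne1, hne2, hw1, hw2⟩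
    · exact h1.2.2.2.1 ⟨s, c, hc.symm⟩
    · exact h2.2.2.2.1 ⟨c, t, hc.symm⟩
    · obtain ⟨hl1, _⟩ := pair_split hl hne1 hne2
      rw [hl1] at hw1
      rcases last_step w₁ s Step.E h1 hw1 with h | h <;> exact Step.noConfusion h
  · rintro ⟨s, t, hst⟩
    rcases split_append w₁ w₂ s [Step.N, Step.W] t hst.symm with
      ⟨c, hc⟩ | ⟨c, hc⟩ | ⟨l₁, l₂, hl, hne1, hne2, hw1, hw2⟩
    · exact h1.2.2.2.2 ⟨s, c, hc.symm⟩
    · exact h2.2.2.2.2 ⟨c, t, hc.symm⟩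
    · obtain ⟨hl1, _⟩ := pair_split hl hne1 hne2
      rw [hl1] at hw1
      rcases last_step w₁ s Step.N h1 hw1 with h | h <;> exact Step.noConfusion h

lemma standard_append (w₁ w₂ : List Step) (h1 : IsBigWalk w₁) (h2 : IsBigWalk w₂) :
    Standard (w₁ ++ w₂) := by
  intro a l b hab hloop
  rcases split_append w₁ w₂ a l b hab with
    ⟨c, hc⟩ | ⟨c, hc⟩ | ⟨l₁, l₂, hl, hne1, hne2, hw1, hw2⟩
  · exact h1.2.2.1 a l c hc hloop
  · exact h2.2.2.1 c l b hc hloop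
  · obtain ⟨_, hend, hquar⟩ := hloop
    have hQP1 : IsQPLoop l₁ := by
      refine ⟨hne1, ?_, ?_⟩
      · have hmem : endpt l₁ ∈ positions l := by
          rw [hl]; exact mem_positions_of_prefix l₁ l₂ (endpt_mem_positions l₁)
        have h01 := (hquar _ hmem).1
        have h02 := (hquar _ hmem).2
        have hpa : endpt a ∈ positions w₁ :=
          hw1 ▸ mem_positions_of_prefix a l₁ (endpt_mem_positions a)
        have hha : 0 ≤ (endpt a).1 + (endpt a).2 := h1.1 _ hpa
        have hw1e : (endpt w₁).1 + (endpt w₁).2 = 0 := h1.2.1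
        rw [hw1, endpt_append] at hw1e
        simp only [Prod.fst_add, Prod.snd_add] at hw1e
        have hx : (endpt l₁).1 = 0 ∧ (endpt l₁).2 = 0 := by omega
        rw [Prod.ext_iff]
        exact hx
      · intro p hp
        exact hquar p (by rw [hl]; exact mem_positions_of_prefix l₁ l₂ hp)
    have hh := h1.2.2.1 a l₁ [] (by rw [hw1, List.append_nil]) hQP1
    rw [hl]
    cases l₁ with
    | nil => exact absurd rfl hne1
    | cons x tt => simpa using hh

lemma bigWalk_append (w₁ w₂ : List Step) (h1 : IsBigWalk w₁) (h2 : IsBigWalk w₂) :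
    IsBigWalk (w₁ ++ w₂) := by
  refine ⟨?_, ?_, standard_append w₁ w₂ h1 h2, eager_append w₁ w₂ h1 h2⟩
  · intro p hp
    rcases (mem_positions_append p w₁ w₂).1 hp with h | ⟨q, hq, rfl⟩
    · exact h1.1 p h
    · have hq2 := h2.1 q hq
      have he := h1.2.1
      simp only [Prod.fst_add, Prod.snd_add]
      omega
  · rw [endpt_append]
    have he1 := h1.2.1
    have he2 := h2.2.1
    simp only [Prod.fst_add, Prod.snd_add]
    omega

instance : Fintype Step :=
  ⟨{Step.N, Step.E, Step.S, Step.W}, fun x => by cases x <;> decide⟩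

instance finWalks (K : ℕ) (P : List Step → Prop) :
    Finite {w : List Step // w.length = K ∧ P w} := by
  have h : {w : List Step | w.length = K ∧ P w}.Finite :=
    (List.finite_length_eq (Step) K).subset (fun w hw => hw.1)
  exact h.to_subtype

theorem bigWalk_concat_and_supermultiplicative :
    (∀ w₁ w₂ : List Step, IsBigWalk w₁ → IsBigWalk w₂ → IsBigWalk (w₁ ++ w₂)) ∧
    (∀ m n : ℕ, bCount m * bCount n ≤ bCount (m + n)) := by
  refine ⟨fun w₁ w₂ h1 h2 => bigWalk_append w₁ w₂ h1 h2, fun m n => ?_⟩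
  classical
  let f : {w : List Step // w.length = 2 * m ∧ IsBigWalk w} ×
      {w : List Step // w.length = 2 * n ∧ IsBigWalk w} →
      {w : List Step // w.length = 2 * (m + n) ∧ IsBigWalk w} :=
    fun p => ⟨p.1.1 ++ p.2.1,
      by rw [List.length_append, p.1.2.1, p.2.2.1]; ring,
      bigWalk_append _ _ p.1.2.2 p.2.2.2⟩
  have hinj : Function.Injective f := by
    rintro ⟨⟨u1, hu1⟩, ⟨v1, hv1⟩⟩ ⟨⟨u2, hu2⟩, ⟨v2, hv2⟩⟩ h
    have h' : u1 ++ v1 = u2 ++ v2 := congrArg Subtype.val h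
    have := List.append_inj h' (hu1.1.trans hu2.1.symm)
    simp only [Prod.mk.injEq, Subtype.mk_eq_mk]
    exact ⟨this.1, this.2⟩
  calc bCount m * bCount n
      = Nat.card ({w : List Step // w.length = 2 * m ∧ IsBigWalk w} ×
        {w : List Step // w.length = 2 * n ∧ IsBigWalk w}) := (Nat.card_prod _ _).symm
    _ ≤ bCount (m + n) := Nat.card_le_card_of_injective f hinj
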